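/- Let $1 \le d < q$ and $1 \le r \le m+1$. The sequence $H_r(d,m) = q^m - (1 + \sum_{j=1}^m \alpha_j q^{m-j})$, where $(\alpha_1,\dots,\alpha_m)$ is the $r$-th tuple in ascending lexicographic order among $m$-tuples with entries in $\{0,\dots,q-1\}$ whose coordinate sum is at least $m(q-1)-d$, simplifies to $H_r(d,m) = (d-1)q^{m-1} + \lfloor q^{m-r} \rfloor$ (with the convention $\lfloor q^{m-r} \rfloor = 0$ when $r = m+1$). -/

import Mathlib

/-- `flq q m r` is `⌊q^(m-r)⌋`, i.e. `q^(m-r)` for `r ≤ m` and `0` for `r = m+1`. -/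
noncomputable def flq (q m r : ℕ) : ℕ := if r ≤ m then q ^ (m - r) else 0

namespace HrAux

/-- base-`q` value of a digit tuple. -/
def val (q : ℕ) {m : ℕ} (g : Fin m → ℕ) : ℕ := ∑ j, g j * q ^ (m - 1 - (j : ℕ))

/-- complement tuple -/
def cpl (q : ℕ) {m : ℕ} (g : Fin m → ℕ) : Fin m → ℕ := fun j => q - 1 - g j

lemma geom (q : ℕ) (hq : 1 ≤ q) (n : ℕ) :
    ∑ j ∈ Finset.range n, (q - 1) * q ^ j = q ^ n - 1 := by
  induction n with
  | zero => simp
  | succ n ih =>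
    rw [Finset.sum_range_succ, ih, pow_succ]
    have h1 : 1 ≤ q ^ n := Nat.one_le_pow _ _ hq
    have h3 : (q - 1) * q ^ n + q ^ n = q ^ n * q := by
      have : (q - 1) * q ^ n + 1 * q ^ n = ((q-1)+1) * q ^ n := by rw [Nat.add_mul]
      have h4 : (q-1)+1 = q := by omega
      rw [one_mul] at this
      rw [this, h4, Nat.mul_comm]
    omega

lemma tailgeom (q : ℕ) (hq : 1 ≤ q) (m a : ℕ) (ha : a ≤ m) :
    ∑ j ∈ Finset.Ico a m, (q - 1) * q ^ (m - 1 - j) = q ^ (m - a) - 1 := by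
  rw [Finset.sum_Ico_eq_sum_range]
  have h1 : ∀ j ∈ Finset.range (m - a), (q-1) * q ^ (m - 1 - (a + j))
      = (fun i => (q-1) * q ^ i) ((m-a) - 1 - j) := by
    intro j _; simp only; congr 2; omega
  rw [Finset.sum_congr rfl h1, Finset.sum_range_reflect (fun i => (q-1)*q^i) (m-a),
    geom q hq]

lemma sum_digits (q : ℕ) (hq : 1 ≤ q) (m : ℕ) :
    ∑ j : Fin m, (q - 1) * q ^ (m - 1 - (j:ℕ)) = q ^ m - 1 := by
  rw [Fin.sum_univ_eq_sum_range (fun j => (q-1) * q ^ (m-1-j)) m, Finset.range_eq_Ico,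
    tailgeom q hq m 0 (Nat.zero_le m), Nat.sub_zero]

lemma val_add_val_cpl (q : ℕ) (hq : 1 ≤ q) {m : ℕ} (g : Fin m → ℕ)
    (hbd : ∀ j, g j ≤ q - 1) : val q g + val q (cpl q g) = q ^ m - 1 := by
  rw [val, val, ← Finset.sum_add_distrib, ← sum_digits q hq m]
  refine Finset.sum_congr rfl fun j _ => ?_
  rw [← Nat.add_mul]
  congr 1
  have := hbd j
  simp only [cpl]; omega

lemma sum_add_sum_cpl (q : ℕ) {m : ℕ} (g : Fin m → ℕ)
    (hbd : ∀ j, g j ≤ q - 1) : (∑ j, g j) + (∑ j, cpl q g j) = m * (q - 1) := by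
  rw [← Finset.sum_add_distrib]
  have : ∀ j : Fin m, g j + cpl q g j = q - 1 := by
    intro j; have := hbd j; simp only [cpl]; omega
  rw [Finset.sum_congr rfl fun j _ => this j, Finset.sum_const, Finset.card_univ,
    Fintype.card_fin, smul_eq_mul]

lemma cpl_cpl (q : ℕ) {m : ℕ} (g : Fin m → ℕ) (hbd : ∀ j, g j ≤ q - 1) :
    cpl q (cpl q g) = g := by
  funext j; have := hbd j; simp only [cpl]; omega

lemma val_lt_val (q : ℕ) (hq : 1 ≤ q) {m : ℕ} {x y : Fin m → ℕ}
    (hx : ∀ j, x j ≤ q - 1) (i : Fin m)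
    (hpre : ∀ j, j < i → x j = y j) (hlt : x i < y i) : val q x < val q y := by
  set F : (Fin m → ℕ) → ℕ → ℕ :=
    fun g j => (if h : j < m then g ⟨j, h⟩ else 0) * q ^ (m - 1 - j) with hF
  have hval : ∀ g : Fin m → ℕ, val q g = ∑ j ∈ Finset.range m, F g j := by
    intro g
    rw [val, ← Fin.sum_univ_eq_sum_range (fun j => F g j) m]
    refine Finset.sum_congr rfl fun j _ => ?_
    simp [hF, j.isLt]
  have hsplit : ∀ g : Fin m → ℕ, val q g =
      (∑ j ∈ Finset.range (i:ℕ), F g j) + F g i + ∑ j ∈ Finset.Ico ((i:ℕ)+1) m, F g j := by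
    intro g
    rw [hval g, ← Finset.sum_range_add_sum_Ico (F g) (Nat.succ_le_of_lt i.isLt),
      Finset.sum_range_succ]
  have hprefix : (∑ j ∈ Finset.range (i:ℕ), F x j) = ∑ j ∈ Finset.range (i:ℕ), F y j := by
    refine Finset.sum_congr rfl fun j hj => ?_
    have hjm : j < m := lt_trans (Finset.mem_range.mp hj) i.isLt
    have : x ⟨j, hjm⟩ = y ⟨j, hjm⟩ := hpre ⟨j, hjm⟩ (Finset.mem_range.mp hj)
    simp [hF, hjm, this]
  have htail : ∑ j ∈ Finset.Ico ((i:ℕ)+1) m, F x j ≤ q ^ (m - 1 - (i:ℕ)) - 1 := by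
    have h1 : ∀ j ∈ Finset.Ico ((i:ℕ)+1) m, F x j ≤ (q - 1) * q ^ (m - 1 - j) := by
      intro j hj
      have hjm : j < m := (Finset.mem_Ico.mp hj).2
      have := hx ⟨j, hjm⟩
      simp only [hF, dif_pos hjm]
      exact Nat.mul_le_mul_right _ (by omega)
    calc ∑ j ∈ Finset.Ico ((i:ℕ)+1) m, F x j
        ≤ ∑ j ∈ Finset.Ico ((i:ℕ)+1) m, (q - 1) * q ^ (m - 1 - j) :=
          Finset.sum_le_sum h1
      _ = q ^ (m - ((i:ℕ)+1)) - 1 := tailgeom q hq m _ (Nat.succ_le_of_lt i.isLt)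
      _ = q ^ (m - 1 - (i:ℕ)) - 1 := by congr 2; omega
  have hFi : ∀ g : Fin m → ℕ, F g (i:ℕ) = g i * q ^ (m - 1 - (i:ℕ)) := by
    intro g; simp [hF, i.isLt]
  have hp : 1 ≤ q ^ (m - 1 - (i:ℕ)) := Nat.one_le_pow _ _ hq
  have hmul : (x i + 1) * q ^ (m - 1 - (i:ℕ)) ≤ y i * q ^ (m - 1 - (i:ℕ)) :=
    Nat.mul_le_mul_right _ hlt
  have hmul2 : (x i + 1) * q ^ (m - 1 - (i:ℕ))
      = x i * q ^ (m - 1 - (i:ℕ)) + q ^ (m - 1 - (i:ℕ)) := by ring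
  have htail0 : 0 ≤ ∑ j ∈ Finset.Ico ((i:ℕ)+1) m, F y j := Nat.zero_le _
  rw [hsplit x, hsplit y, hprefix, hFi x, hFi y]
  omega

lemma lex_iff (q : ℕ) (hq : 1 ≤ q) {m : ℕ} {x y : Fin m → ℕ}
    (hx : ∀ j, x j ≤ q - 1) (hy : ∀ j, y j ≤ q - 1) :
    toLex x < toLex y ↔ val q x < val q y := by
  constructor
  · rintro ⟨i, h1, h2⟩
    exact val_lt_val q hq hx i h1 h2
  · intro h
    have tri := (Pi.isTrichotomous_lex (· < · : Fin m → Fin m → Prop)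
      (@fun _ => (· < · : ℕ → ℕ → Prop)) wellFounded_lt).trichotomous x y
    have tri2 : toLex x < toLex y ∨ x = y ∨ toLex y < toLex x := by
      by_cases a : toLex x < toLex y
      · exact Or.inl a
      by_cases b : toLex y < toLex x
      · exact Or.inr (Or.inr b)
      exact Or.inr (Or.inl (tri a b))
    rcases tri2 with h' | h' | h'
    · exact h'
    · exfalso
      rw [h'] at h; exact lt_irrefl _ h
    · exfalso
      obtain ⟨i, h1, h2⟩ := h'
      exact absurd h (not_lt.mpr (le_of_lt (val_lt_val q hq hy i h1 h2)))

/-- the `t`-th largest tuple (complement form): `d-1` at position 0 plus an extra 1 at `t-1`. -/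
def dlt (d t : ℕ) {m : ℕ} : Fin m → ℕ :=
  fun j => (if (j:ℕ) = 0 then d - 1 else 0) + (if (j:ℕ) + 1 = t then 1 else 0)

lemma dlt_le (q d t : ℕ) (hd : 1 ≤ d) (hdq : d < q) {m : ℕ} (j : Fin m) :
    dlt d t j ≤ q - 1 := by
  simp only [dlt]
  split <;> split <;> omega

lemma sum_ind {m : ℕ} (c v : ℕ) :
    ∑ j : Fin m, (if (j:ℕ) = c then v else 0) = if c < m then v else 0 := by
  rw [Fin.sum_univ_eq_sum_range (fun j => if j = c then v else 0) m,
    Finset.sum_ite_eq' (Finset.range m) c (fun _ => v)]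
  simp [Finset.mem_range]

lemma dlt_apply {m : ℕ} (d t : ℕ) (j : Fin m) :
    dlt d t j = (if (j:ℕ) = 0 then d - 1 else 0) + (if (j:ℕ) + 1 = t then 1 else 0) := rfl

lemma sum_dlt (d t : ℕ) (hd : 1 ≤ d) (ht : 1 ≤ t) {m : ℕ} : ∑ j : Fin m, dlt d t j ≤ d := by
  simp only [dlt]
  rw [Finset.sum_add_distrib, sum_ind 0 (d-1)]
  have he : ∀ j : Fin m, (if (j:ℕ) + 1 = t then 1 else 0)
      = (if (j:ℕ) = t - 1 then 1 else 0) := by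
    intro j; split <;> split <;> omega
  rw [Finset.sum_congr rfl fun j _ => he j, sum_ind (t-1) 1]
  split <;> split <;> omega

lemma val_dlt (q d t : ℕ) (ht : 1 ≤ t) {k : ℕ} :
    val q (dlt d t : Fin (k+1) → ℕ) = (d - 1) * q ^ k + flq q (k+1) t := by
  simp only [val, dlt, Nat.add_sub_cancel, Nat.add_mul]
  rw [Finset.sum_add_distrib]
  congr 1
  · have he : ∀ j : Fin (k+1), (if (j:ℕ) = 0 then d - 1 else 0) * q ^ (k - (j:ℕ))
        = (if (j:ℕ) = 0 then (d - 1) * q ^ k else 0) := by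
      intro j
      split
      · next h => rw [h, Nat.sub_zero]
      · rw [Nat.zero_mul]
    rw [Finset.sum_congr rfl fun j _ => he j, sum_ind 0 ((d-1) * q ^ k)]
    rw [if_pos (Nat.succ_pos k)]
  · have he : ∀ j : Fin (k+1), (if (j:ℕ) + 1 = t then 1 else 0) * q ^ (k - (j:ℕ))
        = (if (j:ℕ) = t - 1 then q ^ (k + 1 - t) else 0) := by
      intro j
      split
      · next h =>
        rw [if_pos (by omega), Nat.one_mul]
        congr 1; omega
      · next h => rw [if_neg (by omega), Nat.zero_mul]
    rw [Finset.sum_congr rfl fun j _ => he j, sum_ind (t-1) (q ^ (k+1-t)), flq]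
    rcases Nat.lt_or_ge (t-1) (k+1) with h | h
    · rw [if_pos h, if_pos (by omega)]
    · rw [if_neg (by omega), if_neg (by omega)]

lemma vmono (q d : ℕ) (hq : 2 ≤ q) {k : ℕ} {t s : ℕ} (ht : 1 ≤ t) (hts : t < s)
    (hs : s ≤ k + 2) :
    (d - 1) * q ^ k + flq q (k+1) s < (d - 1) * q ^ k + flq q (k+1) t := by
  apply Nat.add_lt_add_left
  have htk : t ≤ k + 1 := by omega
  rw [flq, flq, if_pos htk]
  rcases le_or_gt s (k+1) with h | h
  · rw [if_pos h]
    exact Nat.pow_lt_pow_right (by omega) (by omega)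
  · rw [if_neg (by omega)]
    exact Nat.pow_pos (by omega)

lemma structure_lem (q d : ℕ) (hd : 1 ≤ d) (hdq : d < q) {k : ℕ} (g : Fin (k+1) → ℕ)
    (hs : ∑ j, g j ≤ d) (hv : (d - 1) * q ^ k < val q g) :
    ∃ t, 1 ≤ t ∧ t ≤ k + 1 ∧ g = dlt d t := by
  have hq : 1 ≤ q := by omega
  have hpk : 1 ≤ q ^ k := Nat.one_le_pow _ _ hq
  set T := ∑ i : Fin k, g i.succ * q ^ (k - 1 - (i:ℕ)) with hT
  set S1 := ∑ i : Fin k, g i.succ with hS1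
  have hsingle : ∀ i : Fin k, g i.succ ≤ S1 := fun i =>
    Finset.single_le_sum (f := fun i : Fin k => g i.succ)
      (fun i _ => Nat.zero_le _) (Finset.mem_univ i)
  have hvalsplit : val q g = g 0 * q ^ k + T := by
    rw [val, Fin.sum_univ_succ, hT]
    simp only [Nat.add_sub_cancel, Fin.val_zero, Nat.sub_zero, Fin.val_succ]
    congr 1
    refine Finset.sum_congr rfl fun i _ => ?_
    congr 2 <;> omega
  have hsumsplit : g 0 + S1 = ∑ j, g j := by
    rw [Fin.sum_univ_succ, hS1]
  have hg0 : g 0 ≤ d := by omega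
  have htailbd : T ≤ q ^ k - 1 := by
    calc T ≤ ∑ i : Fin k, (q - 1) * q ^ (k - 1 - (i:ℕ)) := by
          apply Finset.sum_le_sum
          intro i _
          apply Nat.mul_le_mul_right
          have := hsingle i
          omega
      _ = q ^ k - 1 := sum_digits q hq k
  have hT0 : S1 = 0 → T = 0 := by
    intro h0
    rw [hT]
    apply Finset.sum_eq_zero
    intro i _
    have h1 := hsingle i
    have : g i.succ = 0 := by omega
    rw [this, Nat.zero_mul]
  have hg0ge : d - 1 ≤ g 0 := by
    by_contra hcon
    push_neg at hcon
    have h1 : g 0 + 1 ≤ d - 1 := by omega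
    have h3 : g 0 * q ^ k + q ^ k = (g 0 + 1) * q ^ k := by ring
    have h4 : (g 0 + 1) * q ^ k ≤ (d - 1) * q ^ k := Nat.mul_le_mul_right _ h1
    omega
  rcases Nat.eq_or_lt_of_le hg0ge with hg0eq | hg0lt
  · -- g 0 = d - 1
    have hprod : g 0 * q ^ k = (d - 1) * q ^ k := by rw [← hg0eq]
    have hS1le : S1 ≤ 1 := by omega
    rcases Nat.eq_or_lt_of_le hS1le with hS11 | hS10
    · -- S1 = 1
      have hne : S1 ≠ 0 := by omega
      obtain ⟨i0, _, hi0ne⟩ := Finset.exists_ne_zero_of_sum_ne_zero hne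
      have herase : g i0.succ + ∑ i ∈ Finset.univ.erase i0, g i.succ = S1 :=
        Finset.add_sum_erase _ (fun i : Fin k => g i.succ) (Finset.mem_univ i0)
      have hi01 : g i0.succ = 1 := by
        have := hsingle i0
        omega
      have hrest : ∀ i : Fin k, i ≠ i0 → g i.succ = 0 := by
        intro i hi
        have hmem : i ∈ Finset.univ.erase i0 := Finset.mem_erase.mpr ⟨hi, Finset.mem_univ i⟩
        have hz : ∑ i ∈ Finset.univ.erase i0, g i.succ = 0 := by omega
        exact (Finset.sum_eq_zero_iff).mp hz i hmem
      refine ⟨(i0:ℕ) + 2, by omega, by omega, ?_⟩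
      funext j
      induction j using Fin.cases with
      | zero =>
        rw [dlt_apply, Fin.val_zero, if_pos rfl, if_neg (by omega)]
        omega
      | succ i =>
        rcases eq_or_ne i i0 with h | h
        · subst h
          rw [dlt_apply, Fin.val_succ, if_neg (by omega), if_pos (by omega)]
          omega
        · have hne' : (i:ℕ) ≠ (i0:ℕ) := fun hc => h (Fin.val_injective hc)
          have h0 : g i.succ = 0 := hrest i h
          rw [dlt_apply, Fin.val_succ, if_neg (by omega), if_neg (by omega)]
          omega
    · -- S1 = 0 : contradiction
      exfalso
      have := hT0 (by omega)
      omega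
  · -- g 0 = d
    have hg0d : g 0 = d := by omega
    have hS10 : S1 = 0 := by omega
    refine ⟨1, le_refl 1, by omega, ?_⟩
    funext j
    induction j using Fin.cases with
    | zero =>
      rw [dlt_apply, Fin.val_zero, if_pos rfl, if_pos rfl]
      omega
    | succ i =>
      have h1 := hsingle i
      rw [dlt_apply, Fin.val_succ, if_neg (by omega), if_neg (by omega)]
      omega

/-- the `t`-th admissible tuple in ascending lex order. -/
def Etup (q d : ℕ) {m : ℕ} (t : ℕ) : Fin m → ℕ := cpl q (dlt d t)

end HrAux

open HrAux


/-- Heijnen–Pellikaan quantity: for `1 ≤ d < q` and `1 ≤ r ≤ m+1`, if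
`(α₁,…,α_m)` is the `r`-th tuple in ascending lexicographic order among `m`-tuples
with entries in `{0,…,q-1}` and coordinate sum at least `m(q-1)-d`, then
`q^m - (1 + ∑ α_j q^(m-j)) = (d-1)q^(m-1) + ⌊q^(m-r)⌋`. -/
theorem Hr_simplifies (q d m r : ℕ) (hd : 1 ≤ d) (hdq : d < q) (hm : 1 ≤ m)
    (hr : 1 ≤ r) (hrm : r ≤ m + 1)
    (α : Fin m → ℕ)
    (hbd : ∀ j, α j ≤ q - 1)
    (hsum : m * (q - 1) - d ≤ ∑ j, α j)
    (hrth : Set.ncard {β : Fin m → ℕ | (∀ j, β j ≤ q - 1) ∧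
        m * (q - 1) - d ≤ ∑ j, β j ∧ toLex β < toLex α} = r - 1) :
    q ^ m - (1 + ∑ j : Fin m, α j * q ^ (m - 1 - (j : ℕ)))
      = (d - 1) * q ^ (m - 1) + flq q m r := by
  obtain ⟨k, rfl⟩ : ∃ k, m = k + 1 := ⟨m - 1, by clear hrth; omega⟩
  have hq1 : 1 ≤ q := by clear hrth; omega
  have hq2 : 2 ≤ q := by clear hrth; omega
  have hQ : 1 ≤ q ^ (k+1) := Nat.one_le_pow _ _ hq1
  set E : ℕ → (Fin (k+1) → ℕ) := Etup q d with hE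
  -- basic facts
  have hadm : ∀ g : Fin (k+1) → ℕ, (∀ j, g j ≤ q - 1) →
      ((k+1) * (q-1) - d ≤ ∑ j, g j ↔ ∑ j, cpl q g j ≤ d) := by
    intro g hg
    have := sum_add_sum_cpl q g hg
    constructor <;> intro h <;> clear hrth <;> omega
  have hαc : val q α + val q (cpl q α) = q ^ (k+1) - 1 := val_add_val_cpl q hq1 α hbd
  have hsumα : ∑ j, cpl q α j ≤ d := (hadm α hbd).mp hsum
  have hEbd : ∀ t, ∀ j, E t j ≤ q - 1 := fun t j => Nat.sub_le _ _
  have hcplE : ∀ t, cpl q (E t) = dlt d t := fun t =>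
    cpl_cpl q (dlt d t) (fun j => dlt_le q d t hd hdq j)
  have hvalE : ∀ t, 1 ≤ t →
      val q (cpl q (E t)) = (d-1) * q^k + flq q (k+1) t := by
    intro t ht
    rw [hcplE t, val_dlt q d t ht]
  have hEc : ∀ t, 1 ≤ t → val q (E t) + val q (cpl q (E t)) = q ^ (k+1) - 1 := fun t _ =>
    val_add_val_cpl q hq1 (E t) (hEbd t)
  have hsumE : ∀ t, 1 ≤ t → (k+1) * (q-1) - d ≤ ∑ j, E t j := by
    intro t ht
    refine (hadm (E t) (hEbd t)).mpr ?_
    rw [hcplE t]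
    exact sum_dlt d t hd ht
  have hmemC : ∀ g : Fin (k+1) → ℕ, (∀ j, g j ≤ q - 1) →
      (toLex g < toLex α ↔ val q (cpl q α) < val q (cpl q g)) := by
    intro g hg
    rw [lex_iff q hq1 hg hbd]
    have h1 := val_add_val_cpl q hq1 g hg
    constructor <;> intro h <;> clear hrth <;> omega
  have hvgoal : (∑ j : Fin (k+1), α j * q ^ (k + 1 - 1 - (j:ℕ))) = val q α := rfl
  rw [hvgoal]
  have hexp : q ^ (k + 1 - 1) = q ^ k := rfl
  rw [hexp]
  -- injectivity of E on initial segments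
  have hinj : ∀ b : ℕ, b ≤ k + 2 → Set.InjOn E (Set.Icc 1 b) := by
    intro b hb t1 h1 t2 h2 he
    simp only [Set.mem_Icc] at h1 h2
    by_contra hne
    have hvv : val q (cpl q (E t1)) = val q (cpl q (E t2)) := by rw [he]
    rw [hvalE t1 h1.1, hvalE t2 h2.1] at hvv
    rcases lt_or_gt_of_ne hne with h | h
    · have := vmono q d hq2 (k := k) h1.1 h (by clear hrth; omega)
      clear hrth; omega
    · have := vmono q d hq2 (k := k) h2.1 h (by clear hrth; omega)
      clear hrth; omega
  have hicc : ∀ b : ℕ, (Set.Icc 1 b).ncard = b := by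
    intro b
    rw [← Finset.coe_Icc, Set.ncard_coe_finset, Nat.card_Icc]
    clear hrth; omega
  rcases lt_trichotomy (val q (cpl q α)) ((d-1) * q^k + flq q (k+1) r) with hlt | heq | hgt
  · -- too small : the first r tuples would all be below α
    exfalso
    have hsub : E '' (Set.Icc 1 r) ⊆ {β : Fin (k+1) → ℕ | (∀ j, β j ≤ q - 1) ∧
        (k+1) * (q - 1) - d ≤ ∑ j, β j ∧ toLex β < toLex α} := by
      rintro β ⟨t, ht, rfl⟩
      simp only [Set.mem_Icc] at ht
      refine ⟨hEbd t, hsumE t ht.1, ?_⟩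
      refine (hmemC (E t) (hEbd t)).mpr ?_
      rw [hvalE t ht.1]
      rcases Nat.eq_or_lt_of_le ht.2 with h | h
      · rw [h]; exact hlt
      · have := vmono q d hq2 (k := k) ht.1 h (by clear hrth; omega)
        clear hrth; omega
    have hfin : Set.Finite {β : Fin (k+1) → ℕ | (∀ j, β j ≤ q - 1) ∧
        (k+1) * (q - 1) - d ≤ ∑ j, β j ∧ toLex β < toLex α} := by
      apply Set.Finite.subset (Set.Finite.pi (fun i : Fin (k+1) => Set.finite_Iic (q-1)))
      intro β hb
      rw [Set.mem_pi]
      intro i _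
      exact Set.mem_Iic.mpr (hb.1 i)
    have hle := Set.ncard_le_ncard hsub hfin
    rw [Set.ncard_image_of_injOn (hinj r hrm), hicc r, hrth] at hle
    clear hrth; omega
  · -- equality : conclude
    clear hrth; omega
  · -- too large : α would be a smaller tuple than the r-th
    exfalso
    have hbase : (d-1) * q^k < val q (cpl q α) := by
      have := Nat.le_add_right ((d-1) * q^k) (flq q (k+1) r)
      clear hrth; omega
    obtain ⟨s, hs1, hsk, hseq⟩ := structure_lem q d hd hdq (cpl q α) hsumα hbase
    have hvs : val q (cpl q α) = (d-1)*q^k + flq q (k+1) s := by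
      rw [hseq, val_dlt q d s hs1]
    have hsr : s < r := by
      by_contra hcon
      push_neg at hcon
      rcases Nat.eq_or_lt_of_le hcon with h | h
      · rw [← h] at hvs; clear hrth; omega
      · have := vmono q d hq2 (k := k) hr h (by clear hrth; omega)
        clear hrth; omega
    have hCeq : {β : Fin (k+1) → ℕ | (∀ j, β j ≤ q - 1) ∧
        (k+1) * (q - 1) - d ≤ ∑ j, β j ∧ toLex β < toLex α} = E '' (Set.Icc 1 (s-1)) := by
      ext β
      constructor
      · rintro ⟨hb1, hb2, hb3⟩
        have hc := (hmemC β hb1).mp hb3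
        have hb2' : ∑ j, cpl q β j ≤ d := (hadm β hb1).mp hb2
        have hbase' : (d-1)*q^k < val q (cpl q β) := by clear hrth; omega
        obtain ⟨t, ht1, htk, hteq⟩ := structure_lem q d hd hdq (cpl q β) hb2' hbase'
        have hvt : val q (cpl q β) = (d-1)*q^k + flq q (k+1) t := by
          rw [hteq, val_dlt q d t ht1]
        have hts : t < s := by
          by_contra hcon
          push_neg at hcon
          rcases Nat.eq_or_lt_of_le hcon with h | h
          · rw [← h] at hvt; clear hrth; omega
          · have := vmono q d hq2 (k := k) hs1 h (by clear hrth; omega)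
            clear hrth; omega
        refine ⟨t, Set.mem_Icc.mpr ⟨ht1, by clear hrth; omega⟩, ?_⟩
        have hb' : β = cpl q (cpl q β) := (cpl_cpl q β hb1).symm
        rw [hE, Etup, ← hteq]
        exact hb'.symm
      · rintro ⟨t, ht, rfl⟩
        simp only [Set.mem_Icc] at ht
        refine ⟨hEbd t, hsumE t ht.1, ?_⟩
        refine (hmemC (E t) (hEbd t)).mpr ?_
        rw [hvalE t ht.1, hvs]
        exact vmono q d hq2 (k := k) ht.1 (by clear hrth; omega) (by clear hrth; omega)
    rw [hCeq, Set.ncard_image_of_injOn (hinj (s-1) (by clear hrth; omega)), hicc (s-1)] at hrth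
    omega
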